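/- Let H be a finite-dimensional complex inner product space and let Π and Δ be orthogonal projections on H. If ψ ∈ ker Π and w = (Π − ΠΔΠ)⁺ Δ ψ, then (I − Δ)(ψ + w) = P_{ker Π ∩ ker Δ} ψ. -/

import Mathlib

open LinearMap

/-- The orthogonal projection onto a submodule, as an endomorphism of the ambient space. -/
noncomputable def projL {H : Type*} [NormedAddCommGroup H] [InnerProductSpace ℂ H]
    (K : Submodule ℂ H) [K.HasOrthogonalProjection] : H →ₗ[ℂ] H :=
  K.subtype ∘ₗ (K.orthogonalProjectionOnto).toLinearMap

/-- The four Moore–Penrose equations: `B` is the Moore–Penrose pseudoinverse of `A`. -/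
def IsMPInv {H : Type*} [NormedAddCommGroup H] [InnerProductSpace ℂ H]
    [FiniteDimensional ℂ H] (A B : H →ₗ[ℂ] H) : Prop :=
  A ∘ₗ B ∘ₗ A = A ∧ B ∘ₗ A ∘ₗ B = B ∧
    adjoint (A ∘ₗ B) = A ∘ₗ B ∧ adjoint (B ∘ₗ A) = B ∘ₗ A

lemma zero_of_mul_adjoint_self {H : Type*} [NormedAddCommGroup H] [InnerProductSpace ℂ H]
    [FiniteDimensional ℂ H] (N : H →ₗ[ℂ] H) (h : N * adjoint N = 0) : N = 0 := by
  have hNa : adjoint N = 0 := by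
    ext v
    rw [LinearMap.zero_apply, ← inner_self_eq_zero (𝕜 := ℂ)]
    rw [adjoint_inner_left]
    have h0 : N (adjoint N v) = 0 := by
      have := LinearMap.congr_fun h v
      simpa [Module.End.mul_apply] using this
    simp [h0]
  calc N = adjoint (adjoint N) := (adjoint_adjoint N).symm
    _ = 0 := by rw [hNa, map_zero]

/-- If `ψ ∈ ker Π` and `w = (Π − ΠΔΠ)⁺ Δ ψ` then
`(I − Δ)(ψ + w) = P_{ker Π ∩ ker Δ} ψ`. -/
theorem stmt2 {H : Type*} [NormedAddCommGroup H] [InnerProductSpace ℂ H]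
    [FiniteDimensional ℂ H]
    (Pr Dl : H →ₗ[ℂ] H)
    (hPr : Pr ∘ₗ Pr = Pr) (hPra : adjoint Pr = Pr)
    (hDl : Dl ∘ₗ Dl = Dl) (hDla : adjoint Dl = Dl)
    (B : H →ₗ[ℂ] H) (hB : IsMPInv (Pr - Pr ∘ₗ Dl ∘ₗ Pr) B)
    (ψ : H) (hψ : ψ ∈ ker Pr)
    (w : H) (hw : w = B (Dl ψ)) :
    ((LinearMap.id - Dl : H →ₗ[ℂ] H)) (ψ + w) = projL (ker Pr ⊓ ker Dl) ψ := by
  obtain ⟨h1, h2, h3, h4⟩ := hB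
  set A : H →ₗ[ℂ] H := Pr - Pr ∘ₗ Dl ∘ₗ Pr with hA
  have hA' : A = Pr - Pr * Dl * Pr := hA
  have h1' : A * B * A = A := h1
  have h2' : B * A * B = B := h2
  have hadj : ∀ f g : H →ₗ[ℂ] H, adjoint (f * g) = adjoint g * adjoint f :=
    fun f g => adjoint_comp f g
  have h3' : adjoint (A * B) = A * B := h3
  have h4' : adjoint (B * A) = B * A := h4
  have hPr' : Pr * Pr = Pr := hPr
  have hDl' : Dl * Dl = Dl := hDl
  have hψ0 : Pr ψ = 0 := hψ
  have hAa : adjoint A = A := by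
    rw [hA', map_sub, hPra, hadj, hadj, hPra, hDla]
    exact congrArg (Pr - ·) (mul_assoc Pr Dl Pr).symm
  have hPrA : Pr * A = A := by
    rw [hA', mul_sub]
    show Pr * Pr - Pr * Pr * Dl * Pr = Pr - Pr * Dl * Pr
    rw [hPr']
  have hAPr : A * Pr = A := by
    rw [hA', sub_mul]
    show Pr * Pr - Pr * Dl * (Pr * Pr) = Pr - Pr * Dl * Pr
    rw [hPr']
  have hPrBA : Pr * (B * A) = B * A := by
    calc Pr * (B * A) = Pr * adjoint (B * A) := by rw [h4']
      _ = Pr * (A * adjoint B) := by rw [hadj, hAa]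
      _ = Pr * A * adjoint B := by rw [mul_assoc]
      _ = A * adjoint B := by rw [hPrA]
      _ = adjoint (B * A) := by rw [hadj, hAa]
      _ = B * A := h4'
  have hABPr : A * B * Pr = A * B := by
    calc A * B * Pr = adjoint (A * B) * Pr := by rw [h3']
      _ = adjoint B * A * Pr := by rw [hadj, hAa]
      _ = adjoint B * (A * Pr) := by rw [mul_assoc]
      _ = adjoint B * A := by rw [hAPr]
      _ = adjoint (A * B) := by rw [hadj, hAa]
      _ = A * B := h3'
  set C : H →ₗ[ℂ] H := Pr - A * B with hC
  have hCa : adjoint C = C := by rw [hC, map_sub, hPra, h3']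
  have hPrC : Pr * C = C := by
    rw [hC, mul_sub, hPr', ← mul_assoc, hPrA]
  have hCPr : C * Pr = C := by
    rw [hC, sub_mul, hPr', mul_assoc, ← mul_assoc, hABPr]
  have hCA : C * A = 0 := by
    rw [hC, sub_mul, hPrA, h1', sub_self]
  have hAC : A * C = 0 := by
    have h5 := congrArg adjoint hCA
    rwa [hadj, hAa, hCa, map_zero] at h5
  have hPrDlC : Pr * Dl * C = C := by
    have h5 : (Pr - Pr * Dl * Pr) * C = 0 := by rw [← hA']; exact hAC
    rw [sub_mul, hPrC, sub_eq_zero] at h5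
    rw [show Pr * Dl * Pr * C = Pr * Dl * (Pr * C) from mul_assoc _ _ _, hPrC] at h5
    exact h5.symm
  have hCDlPr : C * Dl * Pr = C := by
    have h5 := congrArg adjoint hPrDlC
    rwa [hadj, hadj, hPra, hDla, hCa, ← mul_assoc] at h5
  have hCC : C * C = C := by
    nth_rewrite 2 [hC]
    rw [mul_sub, hCPr, ← mul_assoc, hCA, zero_mul, sub_zero]
  have hCDlC : C * Dl * C = C := by
    calc C * Dl * C = C * Dl * (Pr * C) := by rw [hPrC]
      _ = C * Dl * Pr * C := by rw [mul_assoc (C * Dl) Pr C]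
      _ = C * C := by rw [hCDlPr]
      _ = C := hCC
  have hCDl : C * Dl = C := by
    have hadjN : adjoint (C - C * Dl) = C - Dl * C := by
      rw [map_sub, hCa, hadj, hCa, hDla]
    have hN : (C - C * Dl) * adjoint (C - C * Dl) = 0 := by
      rw [hadjN, sub_mul, mul_sub C C (Dl * C), mul_sub (C * Dl) C (Dl * C), hCC,
        show C * (Dl * C) = C * Dl * C from (mul_assoc _ _ _).symm,
        show C * Dl * (Dl * C) = C * (Dl * Dl) * C by
          rw [mul_assoc, ← mul_assoc Dl Dl C, ← mul_assoc],
        hDl', hCDlC]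
      abel
    have hzero := zero_of_mul_adjoint_self _ hN
    exact (sub_eq_zero.mp hzero).symm
  -- vector computations
  have hPrw : Pr w = w := by
    have hw2 : w = (B * A) (B (Dl ψ)) := by
      rw [hw]
      have := LinearMap.congr_fun h2' (Dl ψ)
      simp only [Module.End.mul_apply] at this ⊢
      exact this.symm
    rw [hw2]
    have := LinearMap.congr_fun hPrBA (B (Dl ψ))
    simpa only [Module.End.mul_apply] using this
  have hCψ : C ψ = 0 := by
    have := LinearMap.congr_fun hCPr ψ
    simp only [Module.End.mul_apply, hψ0, map_zero] at this
    exact this.symm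
  have hCDlψ : C (Dl ψ) = 0 := by
    have := LinearMap.congr_fun hCDl ψ
    simp only [Module.End.mul_apply] at this
    rw [this, hCψ]
  have hPrDlψ : Pr (Dl ψ) = A w := by
    have h5 := hCDlψ
    rw [hC] at h5
    simp only [LinearMap.sub_apply, Module.End.mul_apply] at h5
    rw [hw]
    exact sub_eq_zero.mp h5
  have hAw : A w = w - Pr (Dl w) := by
    have h5 : A w = Pr w - Pr (Dl (Pr w)) := by
      rw [hA']
      simp only [LinearMap.sub_apply, Module.End.mul_apply]
    rw [h5, hPrw]
  set x : H := (ψ + w) - Dl (ψ + w) with hx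
  have hPx : Pr x = 0 := by
    rw [hx]
    have h6 : Pr (Dl (ψ + w)) = Pr (Dl ψ) + Pr (Dl w) := by rw [map_add, map_add]
    rw [map_sub, map_add, hψ0, zero_add, hPrw, h6, hPrDlψ, hAw]
    abel
  have hDx : Dl x = 0 := by
    rw [hx, map_sub]
    have := LinearMap.congr_fun hDl' (ψ + w)
    simp only [Module.End.mul_apply] at this
    rw [this, sub_self]
  have hxK : x ∈ ker Pr ⊓ ker Dl := Submodule.mem_inf.mpr ⟨hPx, hDx⟩
  have hperp : ψ - x ∈ (ker Pr ⊓ ker Dl)ᗮ := by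
    rw [Submodule.mem_orthogonal]
    intro u hu
    obtain ⟨hu1, hu2⟩ := Submodule.mem_inf.mp hu
    have hu1' : Pr u = 0 := hu1
    have hu2' : Dl u = 0 := hu2
    have hψx : ψ - x = Dl (ψ + w) - w := by rw [hx]; abel
    rw [hψx, inner_sub_right]
    have e1 : (inner ℂ u (Dl (ψ + w)) : ℂ) = 0 := by
      rw [← hDla, adjoint_inner_right, hu2', inner_zero_left]
    have e2 : (inner ℂ u w : ℂ) = 0 := by
      rw [← hPrw, ← hPra, adjoint_inner_right, hu1', inner_zero_left]
    rw [e1, e2, sub_zero]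
  have hmain : ((ker Pr ⊓ ker Dl).orthogonalProjectionOnto ψ : H) = x :=
    Submodule.eq_starProjection_of_mem_orthogonal hxK hperp
  simp only [projL, coe_comp, Function.comp_apply, ContinuousLinearMap.coe_coe,
    Submodule.coe_subtype]
  rw [hmain, hx]
  simp [LinearMap.sub_apply]
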